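/- Sequential execution of two communication patterns is in general not equivalent to a single communication pattern execution, while sequential execution of two action models is always equivalent to a single action model execution: for all action models 𝐔, 𝐔' there exists 𝐔'' with M ⊗ 𝐔 ⊗ 𝐔' isomorphic to M ⊗ 𝐔'' for all M; but there exist 𝐑, 𝐑' (namely 𝐑 = 𝐑' = IS) and a model M (namely Sq) such that no communication pattern 𝐑'' satisfies M ⊙ 𝐑'' collectively bisimilar to M ⊙ 𝐑 ⊙ 𝐑'. -/
import Mathlib


namespace Stmt19

/-- An epistemic model. -/
structure EM (A P : Type) where
  W : Type
  sim : A → W → W → Prop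
  L : W → Set P

/-- An action model, with (semantic) preconditions: each action determines, for
every model, at which worlds it can be executed. -/
structure AM (A P : Type) where
  E : Type
  rel : A → E → E → Prop
  pre : E → (M : EM A P) → M.W → Prop

/-- Action model execution `M ⊗ 𝐔`: worlds are pairs `(v,e)` with `M,v ⊨ pre(e)`,
relations are pointwise, valuation inherited from `M`. -/
def exec {A P : Type} (M : EM A P) (U : AM A P) : EM A P where
  W := {x : M.W × U.E // U.pre x.2 M x.1}
  sim a x y := M.sim a x.1.1 y.1.1 ∧ U.rel a x.1.2 y.1.2
  L x := M.L x.1.1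

/-- Isomorphism of epistemic models. -/
def Iso {A P : Type} (M N : EM A P) : Prop :=
  ∃ e : M.W ≃ N.W,
    (∀ a x y, M.sim a x y ↔ N.sim a (e x) (e y)) ∧ ∀ x, M.L x = N.L (e x)

/- Part B setup: two agents `false = a`, `true = b`; the square model `Sq` and
the twice-iterated immediate snapshot update. -/

abbrev Agent := Bool
abbrev SqW := Bool × Bool

def sqSim (c : Agent) (w w' : SqW) : Prop :=
  if c then w.2 = w'.2 else w.1 = w'.1

def genRel (CG : Set (Agent → Agent → Prop)) (c : Agent)
    (x y : SqW × {R // R ∈ CG}) : Prop :=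
  ({d | x.2.1 d c} = {d | y.2.1 d c}) ∧ ∀ d, x.2.1 d c → sqSim d x.1 y.1

inductive Pat : Type
  | Rab | Rba | U

def recv : Pat → Agent → Set Agent
  | Pat.Rab, false => {false}
  | Pat.Rab, true => Set.univ
  | Pat.Rba, false => Set.univ
  | Pat.Rba, true => {true}
  | Pat.U, _ => Set.univ

abbrev W1 := SqW × Pat
abbrev W2 := W1 × Pat

def sim1 (c : Agent) (x y : W1) : Prop :=
  recv x.2 c = recv y.2 c ∧ ∀ d ∈ recv x.2 c, sqSim d x.1 y.1

def sim2 (c : Agent) (x y : W2) : Prop :=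
  recv x.2 c = recv y.2 c ∧ ∀ d ∈ recv x.2 c, sim1 d x.1 y.1

/-- Collective bisimilarity (total and surjective bisimulation). -/
def Bisimilar {X Y V : Type} (r1 : Agent → X → X → Prop) (v1 : X → V)
    (r2 : Agent → Y → Y → Prop) (v2 : Y → V) : Prop :=
  ∃ Z : X → Y → Prop,
    (∀ x y, Z x y → v1 x = v2 y) ∧
    (∀ B : Set Agent, B.Nonempty → ∀ x x' y, Z x y →
      (∀ c ∈ B, r1 c x x') → ∃ y', (∀ c ∈ B, r2 c y y') ∧ Z x' y') ∧
    (∀ B : Set Agent, B.Nonempty → ∀ x y y', Z x y →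
      (∀ c ∈ B, r2 c y y') → ∃ x', (∀ c ∈ B, r1 c x x') ∧ Z x' y') ∧
    (∀ x, ∃ y, Z x y) ∧ (∀ y, ∃ x, Z x y)

/-! ### Auxiliary machinery -/

instance : DecidableEq Pat := fun a b => by
  cases a <;> cases b <;> first
    | exact .isTrue rfl
    | exact .isFalse (fun h => Pat.noConfusion h)

instance : Fintype Pat :=
  ⟨⟨{Pat.Rab, Pat.Rba, Pat.U}, by decide⟩, fun x => by cases x <;> decide⟩

def recvB : Pat → Bool → Bool → Bool
  | Pat.Rab, false, d => !d
  | Pat.Rab, true, _ => true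
  | Pat.Rba, false, _ => true
  | Pat.Rba, true, d => d
  | Pat.U, _, _ => true

lemma mem_recv (p : Pat) (c d : Agent) : d ∈ recv p c ↔ recvB p c d = true := by
  cases p <;> cases c <;> cases d <;> simp [recv, recvB]

def reqB (p p' : Pat) (c : Agent) : Bool :=
  (recvB p c false == recvB p' c false) && (recvB p c true == recvB p' c true)

lemma req_iff (p p' : Pat) (c : Agent) : recv p c = recv p' c ↔ reqB p p' c = true := by
  unfold reqB
  simp only [Bool.and_eq_true, beq_iff_eq]
  constructor
  · intro h
    have hm : ∀ d, recvB p c d = recvB p' c d := fun d => by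
      rw [Bool.eq_iff_iff, ← mem_recv, ← mem_recv, h]
    exact ⟨hm false, hm true⟩
  · rintro ⟨h1, h2⟩
    ext d
    rw [mem_recv, mem_recv]
    cases d
    · rw [h1]
    · rw [h2]

def sqSimB (c : Agent) (w w' : SqW) : Bool :=
  if c then w.2 == w'.2 else w.1 == w'.1

lemma sqSim_iff (c : Agent) (w w' : SqW) : sqSim c w w' ↔ sqSimB c w w' = true := by
  cases c <;> simp [sqSim, sqSimB]

lemma ball_iff {P : Agent → Prop} {Q : Agent → Bool}
    (hPQ : ∀ d, P d ↔ Q d = true) (p : Pat) (c : Agent) :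
    (∀ d ∈ recv p c, P d) ↔ ((!(recvB p c false) || Q false) && (!(recvB p c true) || Q true)) = true := by
  simp only [Bool.and_eq_true, Bool.or_eq_true, Bool.not_eq_true']
  constructor
  · intro h
    constructor
    · cases hf : recvB p c false
      · exact Or.inl rfl
      · exact Or.inr ((hPQ false).mp (h false ((mem_recv p c false).mpr hf)))
    · cases ht : recvB p c true
      · exact Or.inl rfl
      · exact Or.inr ((hPQ true).mp (h true ((mem_recv p c true).mpr ht)))
  · rintro ⟨hf, ht⟩ d hd
    rw [mem_recv] at hd
    cases d
    · rcases hf with hf | hf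
      · rw [hd] at hf; exact absurd hf (by simp)
      · exact (hPQ false).mpr hf
    · rcases ht with ht | ht
      · rw [hd] at ht; exact absurd ht (by simp)
      · exact (hPQ true).mpr ht

def sim1B (d : Agent) (x y : W1) : Bool :=
  reqB x.2 y.2 d &&
    ((!(recvB x.2 d false) || sqSimB false x.1 y.1) && (!(recvB x.2 d true) || sqSimB true x.1 y.1))

lemma sim1_iff (d : Agent) (x y : W1) : sim1 d x y ↔ sim1B d x y = true := by
  unfold sim1 sim1B
  rw [Bool.and_eq_true]
  exact and_congr (req_iff _ _ _) (ball_iff (fun e => sqSim_iff e x.1 y.1) _ _)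

def sim2B (c : Agent) (x y : W2) : Bool :=
  reqB x.2 y.2 c &&
    ((!(recvB x.2 c false) || sim1B false x.1 y.1) && (!(recvB x.2 c true) || sim1B true x.1 y.1))

lemma sim2_iff (c : Agent) (x y : W2) : sim2 c x y ↔ sim2B c x y = true := by
  unfold sim2 sim2B
  rw [Bool.and_eq_true]
  exact and_congr (req_iff _ _ _) (ball_iff (fun e => sim1_iff e x.1 y.1) _ _)

def succList : Bool → W2 → List W2
  | false, (((false, false), Pat.Rab), Pat.Rab) => [(((false, false), Pat.Rab), Pat.Rab), (((false, true), Pat.Rab), Pat.Rab)]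
  | false, (((false, false), Pat.Rab), Pat.Rba) => [(((false, false), Pat.Rab), Pat.Rba), (((false, false), Pat.Rab), Pat.U)]
  | false, (((false, false), Pat.Rab), Pat.U) => [(((false, false), Pat.Rab), Pat.Rba), (((false, false), Pat.Rab), Pat.U)]
  | false, (((false, false), Pat.Rba), Pat.Rab) => [(((false, false), Pat.Rba), Pat.Rab), (((false, false), Pat.U), Pat.Rab)]
  | false, (((false, false), Pat.Rba), Pat.Rba) => [(((false, false), Pat.Rba), Pat.Rba), (((false, false), Pat.Rba), Pat.U)]
  | false, (((false, false), Pat.Rba), Pat.U) => [(((false, false), Pat.Rba), Pat.Rba), (((false, false), Pat.Rba), Pat.U)]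
  | false, (((false, false), Pat.U), Pat.Rab) => [(((false, false), Pat.Rba), Pat.Rab), (((false, false), Pat.U), Pat.Rab)]
  | false, (((false, false), Pat.U), Pat.Rba) => [(((false, false), Pat.U), Pat.Rba), (((false, false), Pat.U), Pat.U)]
  | false, (((false, false), Pat.U), Pat.U) => [(((false, false), Pat.U), Pat.Rba), (((false, false), Pat.U), Pat.U)]
  | false, (((false, true), Pat.Rab), Pat.Rab) => [(((false, false), Pat.Rab), Pat.Rab), (((false, true), Pat.Rab), Pat.Rab)]
  | false, (((false, true), Pat.Rab), Pat.Rba) => [(((false, true), Pat.Rab), Pat.Rba), (((false, true), Pat.Rab), Pat.U)]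
  | false, (((false, true), Pat.Rab), Pat.U) => [(((false, true), Pat.Rab), Pat.Rba), (((false, true), Pat.Rab), Pat.U)]
  | false, (((false, true), Pat.Rba), Pat.Rab) => [(((false, true), Pat.Rba), Pat.Rab), (((false, true), Pat.U), Pat.Rab)]
  | false, (((false, true), Pat.Rba), Pat.Rba) => [(((false, true), Pat.Rba), Pat.Rba), (((false, true), Pat.Rba), Pat.U)]
  | false, (((false, true), Pat.Rba), Pat.U) => [(((false, true), Pat.Rba), Pat.Rba), (((false, true), Pat.Rba), Pat.U)]
  | false, (((false, true), Pat.U), Pat.Rab) => [(((false, true), Pat.Rba), Pat.Rab), (((false, true), Pat.U), Pat.Rab)]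
  | false, (((false, true), Pat.U), Pat.Rba) => [(((false, true), Pat.U), Pat.Rba), (((false, true), Pat.U), Pat.U)]
  | false, (((false, true), Pat.U), Pat.U) => [(((false, true), Pat.U), Pat.Rba), (((false, true), Pat.U), Pat.U)]
  | false, (((true, false), Pat.Rab), Pat.Rab) => [(((true, false), Pat.Rab), Pat.Rab), (((true, true), Pat.Rab), Pat.Rab)]
  | false, (((true, false), Pat.Rab), Pat.Rba) => [(((true, false), Pat.Rab), Pat.Rba), (((true, false), Pat.Rab), Pat.U)]
  | false, (((true, false), Pat.Rab), Pat.U) => [(((true, false), Pat.Rab), Pat.Rba), (((true, false), Pat.Rab), Pat.U)]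
  | false, (((true, false), Pat.Rba), Pat.Rab) => [(((true, false), Pat.Rba), Pat.Rab), (((true, false), Pat.U), Pat.Rab)]
  | false, (((true, false), Pat.Rba), Pat.Rba) => [(((true, false), Pat.Rba), Pat.Rba), (((true, false), Pat.Rba), Pat.U)]
  | false, (((true, false), Pat.Rba), Pat.U) => [(((true, false), Pat.Rba), Pat.Rba), (((true, false), Pat.Rba), Pat.U)]
  | false, (((true, false), Pat.U), Pat.Rab) => [(((true, false), Pat.Rba), Pat.Rab), (((true, false), Pat.U), Pat.Rab)]
  | false, (((true, false), Pat.U), Pat.Rba) => [(((true, false), Pat.U), Pat.Rba), (((true, false), Pat.U), Pat.U)]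
  | false, (((true, false), Pat.U), Pat.U) => [(((true, false), Pat.U), Pat.Rba), (((true, false), Pat.U), Pat.U)]
  | false, (((true, true), Pat.Rab), Pat.Rab) => [(((true, false), Pat.Rab), Pat.Rab), (((true, true), Pat.Rab), Pat.Rab)]
  | false, (((true, true), Pat.Rab), Pat.Rba) => [(((true, true), Pat.Rab), Pat.Rba), (((true, true), Pat.Rab), Pat.U)]
  | false, (((true, true), Pat.Rab), Pat.U) => [(((true, true), Pat.Rab), Pat.Rba), (((true, true), Pat.Rab), Pat.U)]
  | false, (((true, true), Pat.Rba), Pat.Rab) => [(((true, true), Pat.Rba), Pat.Rab), (((true, true), Pat.U), Pat.Rab)]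
  | false, (((true, true), Pat.Rba), Pat.Rba) => [(((true, true), Pat.Rba), Pat.Rba), (((true, true), Pat.Rba), Pat.U)]
  | false, (((true, true), Pat.Rba), Pat.U) => [(((true, true), Pat.Rba), Pat.Rba), (((true, true), Pat.Rba), Pat.U)]
  | false, (((true, true), Pat.U), Pat.Rab) => [(((true, true), Pat.Rba), Pat.Rab), (((true, true), Pat.U), Pat.Rab)]
  | false, (((true, true), Pat.U), Pat.Rba) => [(((true, true), Pat.U), Pat.Rba), (((true, true), Pat.U), Pat.U)]
  | false, (((true, true), Pat.U), Pat.U) => [(((true, true), Pat.U), Pat.Rba), (((true, true), Pat.U), Pat.U)]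
  | true, (((false, false), Pat.Rab), Pat.Rab) => [(((false, false), Pat.Rab), Pat.Rab), (((false, false), Pat.Rab), Pat.U)]
  | true, (((false, false), Pat.Rab), Pat.Rba) => [(((false, false), Pat.Rab), Pat.Rba), (((false, false), Pat.U), Pat.Rba)]
  | true, (((false, false), Pat.Rab), Pat.U) => [(((false, false), Pat.Rab), Pat.Rab), (((false, false), Pat.Rab), Pat.U)]
  | true, (((false, false), Pat.Rba), Pat.Rab) => [(((false, false), Pat.Rba), Pat.Rab), (((false, false), Pat.Rba), Pat.U)]
  | true, (((false, false), Pat.Rba), Pat.Rba) => [(((false, false), Pat.Rba), Pat.Rba), (((true, false), Pat.Rba), Pat.Rba)]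
  | true, (((false, false), Pat.Rba), Pat.U) => [(((false, false), Pat.Rba), Pat.Rab), (((false, false), Pat.Rba), Pat.U)]
  | true, (((false, false), Pat.U), Pat.Rab) => [(((false, false), Pat.U), Pat.Rab), (((false, false), Pat.U), Pat.U)]
  | true, (((false, false), Pat.U), Pat.Rba) => [(((false, false), Pat.Rab), Pat.Rba), (((false, false), Pat.U), Pat.Rba)]
  | true, (((false, false), Pat.U), Pat.U) => [(((false, false), Pat.U), Pat.Rab), (((false, false), Pat.U), Pat.U)]
  | true, (((false, true), Pat.Rab), Pat.Rab) => [(((false, true), Pat.Rab), Pat.Rab), (((false, true), Pat.Rab), Pat.U)]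
  | true, (((false, true), Pat.Rab), Pat.Rba) => [(((false, true), Pat.Rab), Pat.Rba), (((false, true), Pat.U), Pat.Rba)]
  | true, (((false, true), Pat.Rab), Pat.U) => [(((false, true), Pat.Rab), Pat.Rab), (((false, true), Pat.Rab), Pat.U)]
  | true, (((false, true), Pat.Rba), Pat.Rab) => [(((false, true), Pat.Rba), Pat.Rab), (((false, true), Pat.Rba), Pat.U)]
  | true, (((false, true), Pat.Rba), Pat.Rba) => [(((false, true), Pat.Rba), Pat.Rba), (((true, true), Pat.Rba), Pat.Rba)]
  | true, (((false, true), Pat.Rba), Pat.U) => [(((false, true), Pat.Rba), Pat.Rab), (((false, true), Pat.Rba), Pat.U)]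
  | true, (((false, true), Pat.U), Pat.Rab) => [(((false, true), Pat.U), Pat.Rab), (((false, true), Pat.U), Pat.U)]
  | true, (((false, true), Pat.U), Pat.Rba) => [(((false, true), Pat.Rab), Pat.Rba), (((false, true), Pat.U), Pat.Rba)]
  | true, (((false, true), Pat.U), Pat.U) => [(((false, true), Pat.U), Pat.Rab), (((false, true), Pat.U), Pat.U)]
  | true, (((true, false), Pat.Rab), Pat.Rab) => [(((true, false), Pat.Rab), Pat.Rab), (((true, false), Pat.Rab), Pat.U)]
  | true, (((true, false), Pat.Rab), Pat.Rba) => [(((true, false), Pat.Rab), Pat.Rba), (((true, false), Pat.U), Pat.Rba)]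
  | true, (((true, false), Pat.Rab), Pat.U) => [(((true, false), Pat.Rab), Pat.Rab), (((true, false), Pat.Rab), Pat.U)]
  | true, (((true, false), Pat.Rba), Pat.Rab) => [(((true, false), Pat.Rba), Pat.Rab), (((true, false), Pat.Rba), Pat.U)]
  | true, (((true, false), Pat.Rba), Pat.Rba) => [(((false, false), Pat.Rba), Pat.Rba), (((true, false), Pat.Rba), Pat.Rba)]
  | true, (((true, false), Pat.Rba), Pat.U) => [(((true, false), Pat.Rba), Pat.Rab), (((true, false), Pat.Rba), Pat.U)]
  | true, (((true, false), Pat.U), Pat.Rab) => [(((true, false), Pat.U), Pat.Rab), (((true, false), Pat.U), Pat.U)]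
  | true, (((true, false), Pat.U), Pat.Rba) => [(((true, false), Pat.Rab), Pat.Rba), (((true, false), Pat.U), Pat.Rba)]
  | true, (((true, false), Pat.U), Pat.U) => [(((true, false), Pat.U), Pat.Rab), (((true, false), Pat.U), Pat.U)]
  | true, (((true, true), Pat.Rab), Pat.Rab) => [(((true, true), Pat.Rab), Pat.Rab), (((true, true), Pat.Rab), Pat.U)]
  | true, (((true, true), Pat.Rab), Pat.Rba) => [(((true, true), Pat.Rab), Pat.Rba), (((true, true), Pat.U), Pat.Rba)]
  | true, (((true, true), Pat.Rab), Pat.U) => [(((true, true), Pat.Rab), Pat.Rab), (((true, true), Pat.Rab), Pat.U)]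
  | true, (((true, true), Pat.Rba), Pat.Rab) => [(((true, true), Pat.Rba), Pat.Rab), (((true, true), Pat.Rba), Pat.U)]
  | true, (((true, true), Pat.Rba), Pat.Rba) => [(((false, true), Pat.Rba), Pat.Rba), (((true, true), Pat.Rba), Pat.Rba)]
  | true, (((true, true), Pat.Rba), Pat.U) => [(((true, true), Pat.Rba), Pat.Rab), (((true, true), Pat.Rba), Pat.U)]
  | true, (((true, true), Pat.U), Pat.Rab) => [(((true, true), Pat.U), Pat.Rab), (((true, true), Pat.U), Pat.U)]
  | true, (((true, true), Pat.U), Pat.Rba) => [(((true, true), Pat.Rab), Pat.Rba), (((true, true), Pat.U), Pat.Rba)]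
  | true, (((true, true), Pat.U), Pat.U) => [(((true, true), Pat.U), Pat.Rab), (((true, true), Pat.U), Pat.U)]
def label0 : W2 → Nat
  | (((false, false), Pat.Rab), Pat.Rab) => 0
  | (((false, false), Pat.Rab), Pat.Rba) => 0
  | (((false, false), Pat.Rab), Pat.U) => 0
  | (((false, false), Pat.Rba), Pat.Rab) => 0
  | (((false, false), Pat.Rba), Pat.Rba) => 0
  | (((false, false), Pat.Rba), Pat.U) => 0
  | (((false, false), Pat.U), Pat.Rab) => 0
  | (((false, false), Pat.U), Pat.Rba) => 0
  | (((false, false), Pat.U), Pat.U) => 0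
  | (((false, true), Pat.Rab), Pat.Rab) => 1
  | (((false, true), Pat.Rab), Pat.Rba) => 1
  | (((false, true), Pat.Rab), Pat.U) => 1
  | (((false, true), Pat.Rba), Pat.Rab) => 1
  | (((false, true), Pat.Rba), Pat.Rba) => 1
  | (((false, true), Pat.Rba), Pat.U) => 1
  | (((false, true), Pat.U), Pat.Rab) => 1
  | (((false, true), Pat.U), Pat.Rba) => 1
  | (((false, true), Pat.U), Pat.U) => 1
  | (((true, false), Pat.Rab), Pat.Rab) => 2
  | (((true, false), Pat.Rab), Pat.Rba) => 2
  | (((true, false), Pat.Rab), Pat.U) => 2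
  | (((true, false), Pat.Rba), Pat.Rab) => 2
  | (((true, false), Pat.Rba), Pat.Rba) => 2
  | (((true, false), Pat.Rba), Pat.U) => 2
  | (((true, false), Pat.U), Pat.Rab) => 2
  | (((true, false), Pat.U), Pat.Rba) => 2
  | (((true, false), Pat.U), Pat.U) => 2
  | (((true, true), Pat.Rab), Pat.Rab) => 3
  | (((true, true), Pat.Rab), Pat.Rba) => 3
  | (((true, true), Pat.Rab), Pat.U) => 3
  | (((true, true), Pat.Rba), Pat.Rab) => 3
  | (((true, true), Pat.Rba), Pat.Rba) => 3
  | (((true, true), Pat.Rba), Pat.U) => 3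
  | (((true, true), Pat.U), Pat.Rab) => 3
  | (((true, true), Pat.U), Pat.Rba) => 3
  | (((true, true), Pat.U), Pat.U) => 3
def label1 : W2 → Nat
  | (((false, false), Pat.Rab), Pat.Rab) => 0
  | (((false, false), Pat.Rab), Pat.Rba) => 1
  | (((false, false), Pat.Rab), Pat.U) => 1
  | (((false, false), Pat.Rba), Pat.Rab) => 1
  | (((false, false), Pat.Rba), Pat.Rba) => 2
  | (((false, false), Pat.Rba), Pat.U) => 1
  | (((false, false), Pat.U), Pat.Rab) => 1
  | (((false, false), Pat.U), Pat.Rba) => 1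
  | (((false, false), Pat.U), Pat.U) => 1
  | (((false, true), Pat.Rab), Pat.Rab) => 3
  | (((false, true), Pat.Rab), Pat.Rba) => 4
  | (((false, true), Pat.Rab), Pat.U) => 4
  | (((false, true), Pat.Rba), Pat.Rab) => 4
  | (((false, true), Pat.Rba), Pat.Rba) => 5
  | (((false, true), Pat.Rba), Pat.U) => 4
  | (((false, true), Pat.U), Pat.Rab) => 4
  | (((false, true), Pat.U), Pat.Rba) => 4
  | (((false, true), Pat.U), Pat.U) => 4
  | (((true, false), Pat.Rab), Pat.Rab) => 6
  | (((true, false), Pat.Rab), Pat.Rba) => 7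
  | (((true, false), Pat.Rab), Pat.U) => 7
  | (((true, false), Pat.Rba), Pat.Rab) => 7
  | (((true, false), Pat.Rba), Pat.Rba) => 8
  | (((true, false), Pat.Rba), Pat.U) => 7
  | (((true, false), Pat.U), Pat.Rab) => 7
  | (((true, false), Pat.U), Pat.Rba) => 7
  | (((true, false), Pat.U), Pat.U) => 7
  | (((true, true), Pat.Rab), Pat.Rab) => 9
  | (((true, true), Pat.Rab), Pat.Rba) => 10
  | (((true, true), Pat.Rab), Pat.U) => 10
  | (((true, true), Pat.Rba), Pat.Rab) => 10
  | (((true, true), Pat.Rba), Pat.Rba) => 11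
  | (((true, true), Pat.Rba), Pat.U) => 10
  | (((true, true), Pat.U), Pat.Rab) => 10
  | (((true, true), Pat.U), Pat.Rba) => 10
  | (((true, true), Pat.U), Pat.U) => 10
def label2 : W2 → Nat
  | (((false, false), Pat.Rab), Pat.Rab) => 0
  | (((false, false), Pat.Rab), Pat.Rba) => 1
  | (((false, false), Pat.Rab), Pat.U) => 2
  | (((false, false), Pat.Rba), Pat.Rab) => 1
  | (((false, false), Pat.Rba), Pat.Rba) => 3
  | (((false, false), Pat.Rba), Pat.U) => 4
  | (((false, false), Pat.U), Pat.Rab) => 1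
  | (((false, false), Pat.U), Pat.Rba) => 1
  | (((false, false), Pat.U), Pat.U) => 1
  | (((false, true), Pat.Rab), Pat.Rab) => 5
  | (((false, true), Pat.Rab), Pat.Rba) => 6
  | (((false, true), Pat.Rab), Pat.U) => 7
  | (((false, true), Pat.Rba), Pat.Rab) => 6
  | (((false, true), Pat.Rba), Pat.Rba) => 8
  | (((false, true), Pat.Rba), Pat.U) => 9
  | (((false, true), Pat.U), Pat.Rab) => 6
  | (((false, true), Pat.U), Pat.Rba) => 6
  | (((false, true), Pat.U), Pat.U) => 6
  | (((true, false), Pat.Rab), Pat.Rab) => 10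
  | (((true, false), Pat.Rab), Pat.Rba) => 11
  | (((true, false), Pat.Rab), Pat.U) => 12
  | (((true, false), Pat.Rba), Pat.Rab) => 11
  | (((true, false), Pat.Rba), Pat.Rba) => 13
  | (((true, false), Pat.Rba), Pat.U) => 14
  | (((true, false), Pat.U), Pat.Rab) => 11
  | (((true, false), Pat.U), Pat.Rba) => 11
  | (((true, false), Pat.U), Pat.U) => 11
  | (((true, true), Pat.Rab), Pat.Rab) => 15
  | (((true, true), Pat.Rab), Pat.Rba) => 16
  | (((true, true), Pat.Rab), Pat.U) => 17
  | (((true, true), Pat.Rba), Pat.Rab) => 16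
  | (((true, true), Pat.Rba), Pat.Rba) => 18
  | (((true, true), Pat.Rba), Pat.U) => 19
  | (((true, true), Pat.U), Pat.Rab) => 16
  | (((true, true), Pat.U), Pat.Rba) => 16
  | (((true, true), Pat.U), Pat.U) => 16
def label3 : W2 → Nat
  | (((false, false), Pat.Rab), Pat.Rab) => 0
  | (((false, false), Pat.Rab), Pat.Rba) => 1
  | (((false, false), Pat.Rab), Pat.U) => 2
  | (((false, false), Pat.Rba), Pat.Rab) => 3
  | (((false, false), Pat.Rba), Pat.Rba) => 4
  | (((false, false), Pat.Rba), Pat.U) => 5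
  | (((false, false), Pat.U), Pat.Rab) => 6
  | (((false, false), Pat.U), Pat.Rba) => 6
  | (((false, false), Pat.U), Pat.U) => 6
  | (((false, true), Pat.Rab), Pat.Rab) => 7
  | (((false, true), Pat.Rab), Pat.Rba) => 8
  | (((false, true), Pat.Rab), Pat.U) => 9
  | (((false, true), Pat.Rba), Pat.Rab) => 10
  | (((false, true), Pat.Rba), Pat.Rba) => 11
  | (((false, true), Pat.Rba), Pat.U) => 12
  | (((false, true), Pat.U), Pat.Rab) => 13
  | (((false, true), Pat.U), Pat.Rba) => 13
  | (((false, true), Pat.U), Pat.U) => 13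
  | (((true, false), Pat.Rab), Pat.Rab) => 14
  | (((true, false), Pat.Rab), Pat.Rba) => 15
  | (((true, false), Pat.Rab), Pat.U) => 16
  | (((true, false), Pat.Rba), Pat.Rab) => 17
  | (((true, false), Pat.Rba), Pat.Rba) => 18
  | (((true, false), Pat.Rba), Pat.U) => 19
  | (((true, false), Pat.U), Pat.Rab) => 20
  | (((true, false), Pat.U), Pat.Rba) => 20
  | (((true, false), Pat.U), Pat.U) => 20
  | (((true, true), Pat.Rab), Pat.Rab) => 21
  | (((true, true), Pat.Rab), Pat.Rba) => 22
  | (((true, true), Pat.Rab), Pat.U) => 23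
  | (((true, true), Pat.Rba), Pat.Rab) => 24
  | (((true, true), Pat.Rba), Pat.Rba) => 25
  | (((true, true), Pat.Rba), Pat.U) => 26
  | (((true, true), Pat.U), Pat.Rab) => 27
  | (((true, true), Pat.U), Pat.Rba) => 27
  | (((true, true), Pat.U), Pat.U) => 27
def label4 : W2 → Nat
  | (((false, false), Pat.Rab), Pat.Rab) => 0
  | (((false, false), Pat.Rab), Pat.Rba) => 1
  | (((false, false), Pat.Rab), Pat.U) => 2
  | (((false, false), Pat.Rba), Pat.Rab) => 3
  | (((false, false), Pat.Rba), Pat.Rba) => 4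
  | (((false, false), Pat.Rba), Pat.U) => 5
  | (((false, false), Pat.U), Pat.Rab) => 6
  | (((false, false), Pat.U), Pat.Rba) => 7
  | (((false, false), Pat.U), Pat.U) => 8
  | (((false, true), Pat.Rab), Pat.Rab) => 9
  | (((false, true), Pat.Rab), Pat.Rba) => 10
  | (((false, true), Pat.Rab), Pat.U) => 11
  | (((false, true), Pat.Rba), Pat.Rab) => 12
  | (((false, true), Pat.Rba), Pat.Rba) => 13
  | (((false, true), Pat.Rba), Pat.U) => 14
  | (((false, true), Pat.U), Pat.Rab) => 15
  | (((false, true), Pat.U), Pat.Rba) => 16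
  | (((false, true), Pat.U), Pat.U) => 17
  | (((true, false), Pat.Rab), Pat.Rab) => 18
  | (((true, false), Pat.Rab), Pat.Rba) => 19
  | (((true, false), Pat.Rab), Pat.U) => 20
  | (((true, false), Pat.Rba), Pat.Rab) => 21
  | (((true, false), Pat.Rba), Pat.Rba) => 22
  | (((true, false), Pat.Rba), Pat.U) => 23
  | (((true, false), Pat.U), Pat.Rab) => 24
  | (((true, false), Pat.U), Pat.Rba) => 25
  | (((true, false), Pat.U), Pat.U) => 26
  | (((true, true), Pat.Rab), Pat.Rab) => 27
  | (((true, true), Pat.Rab), Pat.Rba) => 28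
  | (((true, true), Pat.Rab), Pat.U) => 29
  | (((true, true), Pat.Rba), Pat.Rab) => 30
  | (((true, true), Pat.Rba), Pat.Rba) => 31
  | (((true, true), Pat.Rba), Pat.U) => 32
  | (((true, true), Pat.U), Pat.Rab) => 33
  | (((true, true), Pat.U), Pat.Rba) => 34
  | (((true, true), Pat.U), Pat.U) => 35


set_option maxRecDepth 40000 in
lemma succ_corrB : ∀ (c : Bool) (y y₁ : W2), sim2B c y y₁ = true ↔ y₁ ∈ succList c y := by
  decide

lemma sim2_mem (c : Bool) (y y₁ : W2) : sim2 c y y₁ ↔ y₁ ∈ succList c y :=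
  (sim2_iff c y y₁).trans (succ_corrB c y y₁)

def nextP (lab : W2 → Nat) (y y' : W2) : Prop :=
  lab y = lab y' ∧ ∀ c : Bool,
    (∀ y₁ ∈ succList c y, ∃ y₁' ∈ succList c y', lab y₁ = lab y₁') ∧
    (∀ y₁' ∈ succList c y', ∃ y₁ ∈ succList c y, lab y₁ = lab y₁')

instance (lab : W2 → Nat) (y y' : W2) : Decidable (nextP lab y y') := by
  unfold nextP; infer_instance

lemma label0_val : ∀ y y' : W2, y.1.1 = y'.1.1 → label0 y = label0 y' := by decide
set_option maxRecDepth 40000 in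
lemma L1 : ∀ y y' : W2, nextP label0 y y' ↔ label1 y = label1 y' := by decide
set_option maxRecDepth 40000 in
lemma L2 : ∀ y y' : W2, nextP label1 y y' ↔ label2 y = label2 y' := by decide
set_option maxRecDepth 40000 in
lemma L3 : ∀ y y' : W2, nextP label2 y y' ↔ label3 y = label3 y' := by decide
set_option maxRecDepth 40000 in
lemma L4 : ∀ y y' : W2, nextP label3 y y' ↔ label4 y = label4 y' := by decide
set_option maxRecDepth 40000 in
lemma label4_inj : ∀ y y' : W2, label4 y = label4 y' → y = y' := by decide

lemma step_inv {W : W2 → W2 → Prop}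
    (hsym : ∀ {y y'}, W y y' → W y' y)
    (hf : ∀ (c : Bool) (y y' y₁ : W2), W y y' → sim2 c y y₁ → ∃ y₁', sim2 c y' y₁' ∧ W y₁ y₁')
    {lab : W2 → Nat} (ih : ∀ y y', W y y' → lab y = lab y') :
    ∀ y y', W y y' → nextP lab y y' := by
  intro y y' h
  refine ⟨ih _ _ h, fun c => ⟨?_, ?_⟩⟩
  · intro y₁ h₁
    obtain ⟨y₁', hs, hw⟩ := hf c y y' y₁ h ((sim2_mem c y y₁).mpr h₁)
    exact ⟨y₁', (sim2_mem c y' y₁').mp hs, ih _ _ hw⟩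
  · intro y₁' h₁
    obtain ⟨y₁, hs, hw⟩ := hf c y' y y₁' (hsym h) ((sim2_mem c y' y₁').mpr h₁)
    exact ⟨y₁, (sim2_mem c y y₁).mp hs, (ih _ _ hw).symm⟩

lemma minimality {W : W2 → W2 → Prop}
    (hsym : ∀ {y y'}, W y y' → W y' y)
    (hval : ∀ y y', W y y' → y.1.1 = y'.1.1)
    (hf : ∀ (c : Bool) (y y' y₁ : W2), W y y' → sim2 c y y₁ → ∃ y₁', sim2 c y' y₁' ∧ W y₁ y₁') :
    ∀ y y', W y y' → y = y' := by
  have h0 : ∀ y y', W y y' → label0 y = label0 y' :=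
    fun y y' h => label0_val y y' (hval y y' h)
  have h1 : ∀ y y', W y y' → label1 y = label1 y' :=
    fun y y' h => (L1 y y').mp (step_inv hsym hf h0 y y' h)
  have h2 : ∀ y y', W y y' → label2 y = label2 y' :=
    fun y y' h => (L2 y y').mp (step_inv hsym hf h1 y y' h)
  have h3 : ∀ y y', W y y' → label3 y = label3 y' :=
    fun y y' h => (L3 y y').mp (step_inv hsym hf h2 y y' h)
  have h4 : ∀ y y', W y y' → label4 y = label4 y' :=
    fun y y' h => (L4 y y').mp (step_inv hsym hf h3 y y' h)
  exact fun y y' h => label4_inj y y' (h4 y y' h)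


/-- Sequential execution of two action models is always equivalent to a single
action model execution (composition), but sequential execution of two
communication patterns is in general not: no single communication pattern update
of `Sq` matches `Sq ⊙ IS ⊙ IS`. -/

theorem composition_contrast :
    (∀ (A P : Type) (U U' : AM A P), ∃ U'' : AM A P,
      ∀ M : EM A P, Iso (exec (exec M U) U') (exec M U'')) ∧
    ¬ ∃ CG : Set (Agent → Agent → Prop),
        (∀ R ∈ CG, ∀ d, R d d) ∧
        Bisimilar (genRel CG) (fun x => x.1) sim2 (fun x => x.1.1) := by
  constructor
  · intro A P U U'
    refine ⟨⟨U.E × U'.E, fun a e f => U.rel a e.1 f.1 ∧ U'.rel a e.2 f.2,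
        fun e M w => ∃ h : U.pre e.1 M w, U'.pre e.2 (exec M U) ⟨(w, e.1), h⟩⟩, ?_⟩
    intro M
    refine ⟨⟨fun x => ⟨(x.1.1.1.1, (x.1.1.1.2, x.1.2)), ⟨x.1.1.2, x.2⟩⟩,
        fun y => ⟨(⟨(y.1.1, y.1.2.1), y.2.choose⟩, y.1.2.2), y.2.choose_spec⟩,
        fun _ => rfl, fun _ => rfl⟩, fun a x y => and_assoc, fun x => rfl⟩
  · rintro ⟨CG, hrefl, hb⟩
    obtain ⟨Z, hval, hfor, hbac, htot, hsur⟩ := hb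
    have hWf : ∀ (c : Bool) (y y' y₁ : W2), (∃ x, Z x y ∧ Z x y') → sim2 c y y₁ →
        ∃ y₁', sim2 c y' y₁' ∧ ∃ x, Z x y₁ ∧ Z x y₁' := by
      rintro c y y' y₁ ⟨x, hxy, hxy'⟩ hs
      obtain ⟨x', hgx, hzx'⟩ := hbac {c} ⟨c, rfl⟩ x y y₁ hxy
        (fun d hd => by rw [Set.mem_singleton_iff] at hd; subst hd; exact hs)
      obtain ⟨y₁', hs', hz'⟩ := hfor {c} ⟨c, rfl⟩ x x' y' hxy'
        hgx
      exact ⟨y₁', hs' c rfl, ⟨x', hzx', hz'⟩⟩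
    have heq : ∀ y y' : W2, (∃ x, Z x y ∧ Z x y') → y = y' :=
      minimality (fun ⟨x, h1, h2⟩ => ⟨x, h2, h1⟩)
        (fun y y' ⟨x, h1, h2⟩ => (hval x y h1).symm.trans (hval x y' h2)) hWf
    choose f hf using hsur
    have hinj : Function.Injective f := by
      intro y y' he
      exact heq y y' ⟨f y, hf y, by rw [he]; exact hf y'⟩
    have hg : Function.Injective
        (fun x : SqW × {R // R ∈ CG} => (x.1, (x.2.1 false true, x.2.1 true false))) := by
      rintro ⟨w, R, hR⟩ ⟨w', R', hR'⟩ h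
      simp only [Prod.mk.injEq] at h
      obtain ⟨h1, h2, h3⟩ := h
      have hRR : R = R' := by
        funext d c
        cases d <;> cases c
        · exact propext ⟨fun _ => hrefl R' hR' false, fun _ => hrefl R hR false⟩
        · exact h2
        · exact h3
        · exact propext ⟨fun _ => hrefl R' hR' true, fun _ => hrefl R hR true⟩
      subst h1; subst hRR; rfl
    have hcard := Fintype.card_le_of_injective _ (hg.comp hinj)
    have hW2 : Fintype.card W2 = 36 := by
      simp [Fintype.card_prod]; rfl
    have hT : Fintype.card (SqW × (Prop × Prop)) = 16 := by
      simp [Fintype.card_prod, Fintype.card_prop]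
    rw [hW2, hT] at hcard
    omega


end Stmt19
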